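/- For every integer n ≥ 5, the set Θ(C(n)) of integers t for which the simple cycle C(n) admits a cyclically interval t-coloring equals: the set of odd integers t with 3 ≤ t ≤ n, if n is odd; and the union of the interval [2, n/2 + 1] with the set of even integers t satisfying n/2 + 3 - ε(n/2) ≤ t ≤ n, if n is even (where ε(k) = 1 if k is even, ε(k) = 0 if k is odd). -/

import Mathlib

/-- `ε(k) = 1` if `k` is even, `0` if `k` is odd. -/
def eps (k : ℕ) : ℕ := if Even k then 1 else 0

/-- A cyclically interval `t`-coloring of the simple cycle `C(n)`.
The edges of `C(n)` are indexed by `ZMod n`; edges `i` and `i + 1` are the two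
edges incident to a common vertex. The coloring uses colors `1, ..., t`, all
colors are used, adjacent edges get distinct colors, and at each vertex the two
incident edges receive either consecutive colors or the pair of colors `{1, t}`. -/
def IsCyclicIntervalColoring (n t : ℕ) (φ : ZMod n → ℕ) : Prop :=
  (∀ i, φ i ∈ Finset.Icc 1 t) ∧
  (∀ c ∈ Finset.Icc 1 t, ∃ i, φ i = c) ∧
  (∀ i, φ i ≠ φ (i + 1)) ∧
  (∀ i : ZMod n, φ (i + 1) = φ i + 1 ∨ φ i = φ (i + 1) + 1 ∨
    (φ i = 1 ∧ φ (i + 1) = t) ∨ (φ i = t ∧ φ (i + 1) = 1))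

/-- For `n ≥ 5`, the set `Θ(C(n))` of positive integers `t` for which `C(n)`
admits a cyclically interval `t`-coloring equals the odd `t` in `[3, n]` if `n`
is odd, and `[2, n/2 + 1] ∪ {even t : n/2 + 3 - ε(n/2) ≤ t ≤ n}` if `n` is even. -/
lemma val_add_one' {n : ℕ} [NeZero n] (i : ZMod n) : (i + 1).val = (i.val + 1) % n := by
  rw [ZMod.val_add]
  conv_rhs => rw [Nat.add_mod]
  rw [Nat.mod_eq_of_lt (ZMod.val_lt i), ZMod.val_one_eq_one_mod]

lemma build {n t : ℕ} (hn : 0 < n) (f : ℕ → ℕ)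
    (h1 : ∀ j < n, f j ∈ Finset.Icc 1 t)
    (h2 : ∀ c ∈ Finset.Icc 1 t, ∃ j, j < n ∧ f j = c)
    (h3 : ∀ j < n, f j ≠ f ((j + 1) % n))
    (h4 : ∀ j < n, f ((j + 1) % n) = f j + 1 ∨ f j = f ((j + 1) % n) + 1 ∨
      (f j = 1 ∧ f ((j + 1) % n) = t) ∨ (f j = t ∧ f ((j + 1) % n) = 1)) :
    ∃ φ : ZMod n → ℕ, IsCyclicIntervalColoring n t φ := by
  haveI : NeZero n := ⟨hn.ne'⟩
  refine ⟨fun x => f x.val, ?_, ?_, ?_, ?_⟩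
  · intro i; exact h1 i.val (ZMod.val_lt i)
  · intro c hc
    obtain ⟨j, hj, hf⟩ := h2 c hc
    exact ⟨(j : ZMod n), by simp only [ZMod.val_cast_of_lt hj]; exact hf⟩
  · intro i
    have := h3 i.val (ZMod.val_lt i)
    simpa [val_add_one' i] using this
  · intro i
    have := h4 i.val (ZMod.val_lt i)
    simpa [val_add_one' i] using this

lemma colB {n t : ℕ} (hn : 5 ≤ n) (ht2 : 2 ≤ t) (htn : t ≤ n) (hpar : n % 2 = t % 2) :
    ∃ φ : ZMod n → ℕ, IsCyclicIntervalColoring n t φ := by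
  set s := (n - t) / 2 with hs
  have hns : n = 2 * s + t := by omega
  refine build (t := t) (by omega) (fun j => if j < 2*s then 1 + j % 2 else j + 1 - 2*s) ?_ ?_ ?_ ?_
  · intro j hj; simp only [Finset.mem_Icc]; split <;> omega
  · intro c hc; simp only [Finset.mem_Icc] at hc
    exact ⟨2*s + c - 1, by omega, by split <;> omega⟩
  · intro j hj
    rcases Nat.lt_or_ge (j+1) n with h | h
    · rw [Nat.mod_eq_of_lt h]; split <;> split <;> omega
    · have hj1 : j + 1 = n := by omega
      rw [hj1, Nat.mod_self]; split <;> split <;> omega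
  · intro j hj
    rcases Nat.lt_or_ge (j+1) n with h | h
    · rw [Nat.mod_eq_of_lt h]; split <;> split <;> omega
    · have hj1 : j + 1 = n := by omega
      rw [hj1, Nat.mod_self]; split <;> split <;> omega

lemma colA {n t : ℕ} (hn : 5 ≤ n) (hne : n % 2 = 0) (ht2 : 2 ≤ t) (htn : t ≤ n / 2 + 1) :
    ∃ φ : ZMod n → ℕ, IsCyclicIntervalColoring n t φ := by
  refine build (t := t) (by omega)
    (fun j => if j < t then j + 1 else if j < 2*t-2 then 2*t-1-j else 1 + j % 2) ?_ ?_ ?_ ?_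
  · intro j hj; simp only [Finset.mem_Icc]; split <;> [skip; split] <;> omega
  · intro c hc; simp only [Finset.mem_Icc] at hc
    exact ⟨c - 1, by omega, by split <;> [omega; split <;> omega]⟩
  · intro j hj
    rcases Nat.lt_or_ge (j+1) n with h | h
    · rw [Nat.mod_eq_of_lt h]
      split <;> [skip; split] <;> split <;> [skip; split; skip; split; skip; split] <;> omega
    · have hj1 : j + 1 = n := by omega
      rw [hj1, Nat.mod_self]
      split <;> [skip; split] <;> split <;> [skip; split; skip; split; skip; split] <;> omega
  · intro j hj
    rcases Nat.lt_or_ge (j+1) n with h | h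
    · rw [Nat.mod_eq_of_lt h]
      split <;> [skip; split] <;> split <;> [skip; split; skip; split; skip; split] <;> omega
    · have hj1 : j + 1 = n := by omega
      rw [hj1, Nat.mod_self]
      split <;> [skip; split] <;> split <;> [skip; split; skip; split; skip; split] <;> omega

lemma necessity {n t : ℕ} (hn : 5 ≤ n) (ht : 0 < t) (φ : ZMod n → ℕ)
    (h : IsCyclicIntervalColoring n t φ) :
    2 ≤ t ∧ (n % 2 = 1 → t % 2 = 1 ∧ t ≤ n) ∧
      (n % 2 = 0 → t ≤ n / 2 + 1 ∨ (t % 2 = 0 ∧ t ≤ n)) := by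
  haveI : NeZero n := ⟨by omega⟩
  haveI : NeZero t := ⟨by omega⟩
  obtain ⟨hIcc, hsurj, hne, hstep⟩ := h
  have ht2 : 2 ≤ t := by
    have h0 := hIcc 0
    have h1 := hIcc (0 + 1)
    have hne0 := hne 0
    simp only [Finset.mem_Icc] at h0 h1
    omega
  set f : ℕ → ℕ := fun j => φ (j : ZMod n) with hf
  have hcast : ∀ j : ℕ, ((j : ZMod n) + 1) = ((j + 1 : ℕ) : ZMod n) := by
    intro j; push_cast; ring
  have hstepf : ∀ j : ℕ, f (j+1) = f j + 1 ∨ f j = f (j+1) + 1 ∨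
      (f j = 1 ∧ f (j+1) = t) ∨ (f j = t ∧ f (j+1) = 1) := by
    intro j
    have := hstep (j : ZMod n)
    rw [hcast j] at this
    exact this
  have hIccf : ∀ j : ℕ, 1 ≤ f j ∧ f j ≤ t := by
    intro j; have := hIcc (j : ZMod n); simpa [Finset.mem_Icc] using this
  set step : ℕ → ℤ := fun j =>
    if f (j+1) = f j + 1 ∨ (f j = t ∧ f (j+1) = 1) then 1 else -1 with hstepdef
  set g : ℕ → ℤ := fun j => ∑ k ∈ Finset.range j, step k with hg
  have hgsucc : ∀ j, g (j+1) = g j + step j := by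
    intro j; simp [hg, Finset.sum_range_succ]
  have hstep1 : ∀ j, step j = 1 ∨ step j = -1 := by
    intro j; simp only [hstepdef]; split <;> simp
  -- Claim A: g tracks f modulo t
  have hA : ∀ j, ((g j : ZMod t)) = (f j : ZMod t) - (f 0 : ZMod t) := by
    intro j
    induction j with
    | zero => simp [hg]
    | succ j ih =>
      rw [hgsucc j]
      push_cast
      rw [ih]
      simp only [hstepdef]
      split
      · rename_i hc
        have : (f (j+1) : ZMod t) = (f j : ZMod t) + 1 := by
          rcases hc with hc | ⟨hc1, hc2⟩
          · rw [hc]; push_cast; ring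
          · rw [hc1, hc2]; simp [ZMod.natCast_self]
        rw [this]; push_cast; ring
      · rename_i hc
        push_neg at hc
        have : (f (j+1) : ZMod t) = (f j : ZMod t) - 1 := by
          rcases hstepf j with h1 | h2 | ⟨h31, h32⟩ | ⟨h41, h42⟩
          · exact absurd h1 hc.1
          · rw [h2]; push_cast; ring
          · rw [h31, h32]; simp [ZMod.natCast_self]
          · exact absurd h42 (hc.2 h41)
        rw [this]; push_cast; ring
  -- U and D
  set U : ℕ → ℤ := fun j => ∑ k ∈ Finset.range j,
    (if f (k+1) = f k + 1 ∨ (f k = t ∧ f (k+1) = 1) then (1:ℤ) else 0) with hU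
  set D : ℕ → ℤ := fun j => ∑ k ∈ Finset.range j,
    (if f (k+1) = f k + 1 ∨ (f k = t ∧ f (k+1) = 1) then (0:ℤ) else 1) with hD
  have hgUD : ∀ j, g j = U j - D j := by
    intro j
    rw [hg, hU, hD]
    simp only [← Finset.sum_sub_distrib]
    refine Finset.sum_congr rfl fun k _ => ?_
    rw [hstepdef]
    by_cases hc : f (k+1) = f k + 1 ∨ (f k = t ∧ f (k+1) = 1) <;> simp [hc]
  have hUDj : ∀ j, U j + D j = (j : ℤ) := by
    intro j
    rw [hU, hD]
    simp only [← Finset.sum_add_distrib]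
    have he : ∀ k ∈ Finset.range j,
        ((if f (k+1) = f k + 1 ∨ (f k = t ∧ f (k+1) = 1) then (1:ℤ) else 0) +
         (if f (k+1) = f k + 1 ∨ (f k = t ∧ f (k+1) = 1) then (0:ℤ) else 1)) = 1 := by
      intro k _
      by_cases hc : f (k+1) = f k + 1 ∨ (f k = t ∧ f (k+1) = 1) <;> simp [hc]
    rw [Finset.sum_congr rfl he]
    simp
  have hUmono : ∀ a b, a ≤ b → U a ≤ U b := by
    intro a b hab
    apply Finset.sum_le_sum_of_subset_of_nonneg (Finset.range_subset_range.mpr hab)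
    intro k _ _
    by_cases hc : f (k+1) = f k + 1 ∨ (f k = t ∧ f (k+1) = 1) <;> simp [hc]
  have hDmono : ∀ a b, a ≤ b → D a ≤ D b := by
    intro a b hab
    apply Finset.sum_le_sum_of_subset_of_nonneg (Finset.range_subset_range.mpr hab)
    intro k _ _
    by_cases hc : f (k+1) = f k + 1 ∨ (f k = t ∧ f (k+1) = 1) <;> simp [hc]
  have hU0 : U 0 = 0 := by simp [hU]
  have hD0 : D 0 = 0 := by simp [hD]
  have hkey : ∀ a b, a ≤ b → g b - g a ≤ U b - U a ∧ g a - g b ≤ D b - D a := by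
    intro a b hab
    have h1 := hUmono a b hab
    have h2 := hDmono a b hab
    rw [hgUD a, hgUD b]
    constructor <;> linarith
  -- f is n-periodic at 0
  have hfn : f n = f 0 := by
    simp only [hf, ZMod.natCast_self]
    norm_num
  -- t divides g n
  have hdvd : (t:ℤ) ∣ g n := by
    have h1 := hA n
    rw [hfn] at h1
    rw [sub_self] at h1
    exact (ZMod.intCast_zmod_eq_zero_iff_dvd _ t).mp h1
  -- parity
  have hparg : ∀ j : ℕ, (2:ℤ) ∣ (g j + j) := by
    intro j
    induction j with
    | zero => simp [hg]
    | succ j ih =>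
      rw [hgsucc j]
      rcases hstep1 j with h1 | h1 <;> rw [h1] <;> push_cast <;> omega
  -- bounds on g n
  have hgn_bound : (g n).natAbs ≤ n := by
    have h1 := hgUD n
    have h2 := hUDj n
    have h3 := hUmono 0 n (by omega)
    have h4 := hDmono 0 n (by omega)
    rw [hU0] at h3
    rw [hD0] at h4
    omega
  -- surjectivity pick
  have htot : ∀ c : ℕ, ∃ j, j < n ∧ (1 ≤ c → c ≤ t → f j = c) := by
    intro c
    by_cases hc : 1 ≤ c ∧ c ≤ t
    · obtain ⟨i, hi⟩ := hsurj c (Finset.mem_Icc.mpr hc)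
      refine ⟨i.val, ZMod.val_lt i, fun _ _ => ?_⟩
      rw [hf]
      simp only []
      rw [ZMod.natCast_rightInverse i]
      exact hi
    · exact ⟨0, by omega, fun h1 h2 => absurd ⟨h1, h2⟩ hc⟩
  choose idx hidxlt hidxval using htot
  -- injectivity of c ↦ g (idx c) on Icc 1 t
  have hinj : Set.InjOn (fun c => g (idx c)) (Finset.Icc 1 t) := by
    intro c hc c' hc' hcc
    simp only [Finset.coe_Icc, Set.mem_Icc] at hc hc'
    have e1 := hA (idx c)
    have e2 := hA (idx c')
    rw [hidxval c hc.1 hc.2] at e1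
    rw [hidxval c' hc'.1 hc'.2] at e2
    simp only at hcc
    have e3 : (c : ZMod t) = (c' : ZMod t) := by
      have : ((g (idx c) : ZMod t)) = ((g (idx c') : ZMod t)) := by rw [hcc]
      rw [e1, e2] at this
      exact sub_left_inj.mp this
    have e4 : c ≡ c' [MOD t] := (ZMod.natCast_eq_natCast_iff _ _ _).mp e3
    have e5 : (t:ℤ) ∣ (c' : ℤ) - c := e4.dvd
    obtain ⟨k, hk⟩ := e5
    have hk1 : k < 1 := by
      by_contra hcon
      push_neg at hcon
      have : (t:ℤ) * 1 ≤ (t:ℤ) * k :=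
        mul_le_mul_of_nonneg_left hcon (by positivity)
      omega
    have hk2 : -1 < k := by
      by_contra hcon
      push_neg at hcon
      have : (t:ℤ) * k ≤ (t:ℤ) * (-1) :=
        mul_le_mul_of_nonneg_left hcon (by positivity)
      omega
    have : k = 0 := by omega
    rw [this] at hk
    omega
  -- the range argument
  have hd0 : g n = 0 → t ≤ n / 2 + 1 := by
    intro hd
    have hg0 : g 0 = 0 := by simp [hg]
    have hUDn : U n = D n := by have := hgUD n; omega
    have h2U : 2 * U n = n := by have := hUDj n; omega
    have hbound : ∀ a b : ℕ, a ≤ n → b ≤ n → 2 * (g a - g b) ≤ (n:ℤ) := by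
      intro a b ha hb
      rcases le_total a b with hab | hab
      · have h1 := (hkey a b hab).2
        have h2 := hDmono b n hb
        have h3 := hDmono 0 a (by omega)
        rw [hD0] at h3
        omega
      · have h1 := (hkey b a hab).1
        have h2 := hUmono a n ha
        have h3 := hUmono 0 b (by omega)
        rw [hU0] at h3
        omega
    set S : Finset ℤ := (Finset.Icc 1 t).image (fun c => g (idx c)) with hS
    have hScard : S.card = t := by
      rw [hS, Finset.card_image_of_injOn hinj, Nat.card_Icc]
      omega
    have hSne : S.Nonempty := by
      rw [← Finset.card_pos, hScard]; omega
    set m := S.min' hSne with hm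
    have hsub : S ⊆ Finset.Icc m (m + (n/2 : ℕ)) := by
      intro x hx
      rw [Finset.mem_Icc]
      refine ⟨S.min'_le x hx, ?_⟩
      obtain ⟨c, hc, hcx⟩ := Finset.mem_image.mp hx
      obtain ⟨c₀, hc₀, hc₀m⟩ := Finset.mem_image.mp (S.min'_mem hSne)
      have hineq := hbound (idx c) (idx c₀) (le_of_lt (hidxlt c)) (le_of_lt (hidxlt c₀))
      rw [hcx, hc₀m] at hineq
      have hpar := hparg n
      omega
    have := Finset.card_le_card hsub
    rw [hScard, Int.card_Icc] at this
    omega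
  -- conclusion
  have hgpar := hparg n
  constructor
  · exact ht2
  constructor
  · -- n odd
    intro hodd
    have hdne : g n ≠ 0 := by
      intro h0
      rw [h0] at hgpar
      omega
    have hle : (t:ℤ) ≤ |g n| := Int.le_of_dvd (abs_pos.mpr hdne) ((dvd_abs _ _).mpr hdvd)
    rw [Int.abs_eq_natAbs] at hle
    have hto : t % 2 = 1 := by
      by_contra hcon
      have h2t : (2:ℤ) ∣ (t:ℤ) := by omega
      have h2d : (2:ℤ) ∣ g n := dvd_trans h2t hdvd
      omega
    exact ⟨hto, by omega⟩
  · intro heven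
    by_cases hd : g n = 0
    · left; exact hd0 hd
    · have hle : (t:ℤ) ≤ |g n| := Int.le_of_dvd (abs_pos.mpr hd) ((dvd_abs _ _).mpr hdvd)
      rw [Int.abs_eq_natAbs] at hle
      by_cases hto : t % 2 = 0
      · right; exact ⟨hto, by omega⟩
      · left
        have h2d : (2:ℤ) ∣ g n := by omega
        have hcop : Nat.Coprime 2 t :=
          (Nat.Prime.coprime_iff_not_dvd Nat.prime_two).mpr (by omega)
        have hdvdn : t ∣ (g n).natAbs := by
          rw [← Int.natAbs_natCast t]
          exact Int.natAbs_dvd_natAbs.mpr hdvd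
        have h2dn : 2 ∣ (g n).natAbs := by omega
        have hmul : 2 * t ∣ (g n).natAbs :=
          Nat.Coprime.mul_dvd_of_dvd_of_dvd hcop h2dn hdvdn
        have := Nat.le_of_dvd (by omega) hmul
        omega


theorem statement3 (n : ℕ) (hn : 5 ≤ n) :
    {t : ℕ | 0 < t ∧ ∃ φ : ZMod n → ℕ, IsCyclicIntervalColoring n t φ} =
      if Odd n then {t : ℕ | Odd t ∧ 3 ≤ t ∧ t ≤ n}
      else {t : ℕ | 2 ≤ t ∧ t ≤ n / 2 + 1} ∪
           {t : ℕ | Even t ∧ n / 2 + 3 - eps (n / 2) ≤ t ∧ t ≤ n} := by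
  by_cases hodd : Odd n
  · rw [if_pos hodd]
    have hno : n % 2 = 1 := Nat.odd_iff.mp hodd
    ext t
    simp only [Set.mem_setOf_eq]
    constructor
    · rintro ⟨ht, φ, hφ⟩
      obtain ⟨ht2, hcase, -⟩ := necessity hn ht φ hφ
      obtain ⟨hto, htn⟩ := hcase hno
      exact ⟨Nat.odd_iff.mpr hto, by omega, htn⟩
    · rintro ⟨hto, h3, htn⟩
      have hto' : t % 2 = 1 := Nat.odd_iff.mp hto
      exact ⟨by omega, colB hn (by omega) htn (by omega)⟩
  · rw [if_neg hodd]
    have hne : n % 2 = 0 := Nat.even_iff.mp (Nat.not_odd_iff_even.mp hodd)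
    have hep : eps (n / 2) = if (n / 2) % 2 = 0 then 1 else 0 := by
      unfold eps
      by_cases he : Even (n / 2)
      · rw [if_pos he, if_pos (Nat.even_iff.mp he)]
      · rw [if_neg he, if_neg (by rw [← Nat.even_iff]; exact he)]
    ext t
    simp only [Set.mem_union, Set.mem_setOf_eq]
    constructor
    · rintro ⟨ht, φ, hφ⟩
      obtain ⟨ht2, -, hcase⟩ := necessity hn ht φ hφ
      rcases hcase hne with hle | ⟨hteven, htn⟩
      · left; exact ⟨ht2, hle⟩
      · by_cases hsmall : t ≤ n / 2 + 1
        · left; exact ⟨ht2, hsmall⟩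
        · right
          refine ⟨Nat.even_iff.mpr hteven, ?_, htn⟩
          rw [hep]
          split <;> omega
    · rintro (⟨ht2, htle⟩ | ⟨hteven, htlo, htn⟩)
      · exact ⟨by omega, colA hn hne ht2 htle⟩
      · have hteven' : t % 2 = 0 := Nat.even_iff.mp hteven
        rw [hep] at htlo
        have ht2 : 2 ≤ t := by split at htlo <;> omega
        exact ⟨by omega, colB hn ht2 htn (by omega)⟩
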